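/- Let B be a commutative ring and ⊕_{n≥0} I_n W^n ⊆ B[W] a Rees algebra. Define I'_k = Σ_{r≥k} I_r. Then {I'_k} again satisfies I'_0 = B and I'_k · I'_s ⊆ I'_{k+s}, the filtration is decreasing (I'_k ⊇ I'_{k+1}), and the ring extension ⊕ I_k W^k ⊆ ⊕ I'_k W^k is integral. -/

import Mathlib

open Polynomial

/-- The Rees algebra of a filtration `I` of ideals of `B`: the graded
`B`-subalgebra `⊕ₙ Iₙ Wⁿ` of the polynomial ring `B[W]`. -/
noncomputable def ReesAlg {B : Type*} [CommRing B] (I : ℕ → Ideal B) : Subalgebra B (Polynomial B) :=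
  Algebra.adjoin B {p | ∃ n : ℕ, ∃ g ∈ I n, p = C g * X ^ n}

lemma pow_mem_mul_aux {B : Type*} [CommRing B] (I : ℕ → Ideal B)
    (h0 : I 0 = ⊤) (hmul : ∀ k s : ℕ, I k * I s ≤ I (k + s))
    {g : B} {r : ℕ} (hg : g ∈ I r) : ∀ m : ℕ, g ^ m ∈ I (m * r)
  | 0 => by simp [h0]
  | m + 1 => by
      have h := hmul (m * r) r (Ideal.mul_mem_mul (pow_mem_mul_aux I h0 hmul hg m) hg)
      simpa [pow_succ, Nat.succ_mul] using h

lemma gen_integral {B : Type*} [CommRing B] (I : ℕ → Ideal B)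
    (h0 : I 0 = ⊤) (hmul : ∀ k s : ℕ, I k * I s ≤ I (k + s))
    {g : B} {n r : ℕ} (hnr : n ≤ r) (hg : g ∈ I r) :
    IsIntegral (ReesAlg I) (C g * X ^ n) := by
  rcases Nat.eq_zero_or_pos r with rfl | hr
  · obtain rfl : n = 0 := Nat.le_zero.mp hnr
    have hmem : (C g * X ^ 0 : B[X]) ∈ ReesAlg I := by
      simpa using (ReesAlg I).algebraMap_mem g
    exact isIntegral_algebraMap (x := (⟨_, hmem⟩ : ReesAlg I))
  · have hgn : g ^ n ∈ I (n * r) := pow_mem_mul_aux I h0 hmul hg n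
    have hbase : (C (g ^ n) * X ^ (n * r) : B[X]) ∈ ReesAlg I :=
      Algebra.subset_adjoin ⟨n * r, g ^ n, hgn, rfl⟩
    have hc : (C g * X ^ n) ^ r ∈ ReesAlg I := by
      have : ((C g * X ^ n) ^ r : B[X]) = C (g ^ (r - n)) * (C (g ^ n) * X ^ (n * r)) := by
        rw [mul_pow, ← C_pow, ← mul_assoc, ← C_mul, ← pow_add, Nat.sub_add_cancel hnr,
          ← pow_mul, mul_comm n r]
      rw [this]
      have hC : (C (g ^ (r - n)) : B[X]) ∈ ReesAlg I := by
        simpa [Polynomial.algebraMap_eq] using (ReesAlg I).algebraMap_mem (g ^ (r - n))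
      exact mul_mem hC hbase
    refine ⟨X ^ r - C (⟨_, hc⟩ : ReesAlg I), monic_X_pow_sub_C _ hr.ne', ?_⟩
    simp [sub_eq_zero]

theorem stmt_1 {B : Type*} [CommRing B] (I : ℕ → Ideal B)
    (h0 : I 0 = ⊤) (hmul : ∀ k s : ℕ, I k * I s ≤ I (k + s))
    (I' : ℕ → Ideal B) (hI' : ∀ k, I' k = ⨆ r ∈ Set.Ici k, I r) :
    I' 0 = ⊤ ∧ (∀ k s : ℕ, I' k * I' s ≤ I' (k + s)) ∧
    (∀ k : ℕ, I' (k + 1) ≤ I' k) ∧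
    (∀ p ∈ ReesAlg I', IsIntegral (ReesAlg I) p) := by
  have hI'sub : ∀ k, I' k = ⨆ r : Set.Ici k, I r := by
    intro k; rw [hI', iSup_subtype]
  have hmem : ∀ k r, k ≤ r → I r ≤ I' k := by
    intro k r hkr
    rw [hI'sub]
    exact le_iSup (fun r : Set.Ici k => I r.1) ⟨r, hkr⟩
  refine ⟨?_, ?_, ?_, ?_⟩
  · rw [eq_top_iff, ← h0]; exact hmem 0 0 le_rfl
  · intro k s
    refine Submodule.mul_le.mpr fun x hx y hy => ?_
    rw [hI'sub] at hx hy
    refine Submodule.iSup_induction _ (motive := fun x => x * y ∈ I' (k + s)) hx ?_ (by simp) ?_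
    · rintro ⟨r, hr⟩ x hxr
      refine Submodule.iSup_induction _ (motive := fun y => x * y ∈ I' (k + s)) hy ?_ (by simp) ?_
      · rintro ⟨t, ht⟩ y hyt
        exact hmem (k + s) (r + t) (add_le_add hr ht)
          (hmul r t (Ideal.mul_mem_mul hxr hyt))
      · intro a b ha hb; rw [mul_add]; exact add_mem ha hb
    · intro a b ha hb; rw [add_mul]; exact add_mem ha hb
  · intro k
    rw [hI'sub k, hI'sub (k + 1)]
    exact iSup_le fun ⟨r, hr⟩ => le_iSup (fun r : Set.Ici k => I r.1) ⟨r, le_trans (Nat.le_succ k) hr⟩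
  · intro p hp
    refine Algebra.adjoin_induction ?_ ?_ ?_ ?_ hp
    · rintro x ⟨n, g, hg, rfl⟩
      rw [hI'sub] at hg
      refine Submodule.iSup_induction _ (motive := fun g => IsIntegral (ReesAlg I) (C g * X ^ n))
        hg ?_ (by simpa using isIntegral_zero) ?_
      · rintro ⟨r, hr⟩ g hgr
        exact gen_integral I h0 hmul hr hgr
      · intro a b ha hb
        rw [C_add, add_mul]
        exact ha.add hb
    · intro r
      exact isIntegral_algebraMap (x := (⟨_, (ReesAlg I).algebraMap_mem r⟩ : ReesAlg I))
    · intro x y _ _ hx hy; exact hx.add hy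
    · intro x y _ _ hx hy; exact hx.mul hy
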